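/- arXiv:2408.08833 — 2 statements merged into one kernel-verified Lean document; each statement's English description precedes it below -/
import Mathlib

section
/- Let M ≥ 2, h₁, h₂ ∈ ℂ^M, let σ_s², σ_n² > 0 be real, and let k ≥ 1 be real. Define R₁ = (1 − 1/k)·σ_s²·h₁·h₁ᴴ + (1/k)·σ_s²·(h₁+h₂)·(h₁+h₂)ᴴ + σ_n²·I_M. Then det(R₁) = (σ_n²)^(M−2)·[ (σ_s²‖h₁‖² + σ_n²)·((1/k − 1/k²)·σ_s²‖h₂‖² + σ_n²) + (1/k²)·σ_s²·σ_n²·‖h₂‖² + (1/k)·σ_s²·σ_n²·(h₁ᴴh₂ + h₂ᴴh₁) − ((k−1)/k²)·σ_s⁴·|h₂ᴴh₁|² ]. -/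
set_option maxHeartbeats 1000000


open Matrix Complex BigOperators

/-- Exact determinant expansion (Eq. (22)/(48)) of the covariance matrix
`R₁ = (1 − 1/k)σ_s² h₁h₁ᴴ + (1/k)σ_s² (h₁+h₂)(h₁+h₂)ᴴ + σ_n² I_M` under hypothesis H₁. -/
theorem det_R1_exact_expansion
    (M : ℕ) (hM : 2 ≤ M) (h₁ h₂ : Fin M → ℂ) (σs2 σn2 : ℝ)
    (hσs2 : 0 < σs2) (hσn2 : 0 < σn2) (k : ℝ) (hk : 1 ≤ k) :
    ((((1 - 1/k) * σs2 : ℝ) : ℂ) • Matrix.vecMulVec h₁ (star h₁)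
        + (((1/k) * σs2 : ℝ) : ℂ) • Matrix.vecMulVec (h₁ + h₂) (star (h₁ + h₂))
        + ((σn2 : ℝ) : ℂ) • (1 : Matrix (Fin M) (Fin M) ℂ)).det
      = ((σn2 : ℝ) : ℂ) ^ (M - 2) *
        ( ((σs2 * (∑ i, ‖h₁ i‖ ^ 2) + σn2 : ℝ) : ℂ)
            * (((1/k - 1/k^2) * σs2 * (∑ i, ‖h₂ i‖ ^ 2) + σn2 : ℝ) : ℂ)
          + (((1/k^2) * σs2 * σn2 * (∑ i, ‖h₂ i‖ ^ 2) : ℝ) : ℂ)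
          + (((1/k) * σs2 * σn2 : ℝ) : ℂ)
              * ((∑ i, (starRingEnd ℂ) (h₁ i) * h₂ i) + (∑ i, (starRingEnd ℂ) (h₂ i) * h₁ i))
          - ((((k - 1)/k^2) * σs2 ^ 2 * ‖∑ i, (starRingEnd ℂ) (h₂ i) * h₁ i‖ ^ 2 : ℝ) : ℂ) ) := by
  have hkR : k ≠ 0 := by linarith
  have hc : ((σn2 : ℝ) : ℂ) ≠ 0 := by exact_mod_cast hσn2.ne'
  -- replace all divisions by `k` with the single atom `u = 1/k`
  have r2 : (k - 1)/k^2 = 1/k - (1/k)^2 := by field_simp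
  have r1 : 1/k^2 = (1/k)^2 := by rw [div_pow, one_pow]
  rw [r1, r2]
  set u : ℝ := 1/k with hu
  set c : ℂ := ((σn2 : ℝ) : ℂ) with hcdef
  set a : ℂ := (((1 - u) * σs2 : ℝ) : ℂ) with hadef
  set b : ℂ := ((u * σs2 : ℝ) : ℂ) with hbdef
  set U : Matrix (Fin M) (Fin 2) ℂ :=
    Matrix.of (fun i j => if j = 0 then a * h₁ i else b * (h₁ i + h₂ i)) with hU
  set V : Matrix (Fin 2) (Fin M) ℂ :=
    Matrix.of (fun j i => if j = 0 then (starRingEnd ℂ) (h₁ i)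
      else (starRingEnd ℂ) (h₁ i + h₂ i)) with hV
  have key : (a • Matrix.vecMulVec h₁ (star h₁)
        + b • Matrix.vecMulVec (h₁ + h₂) (star (h₁ + h₂))
        + c • (1 : Matrix (Fin M) (Fin M) ℂ))
      = c • (1 + (c⁻¹ • U) * V) := by
    rw [Matrix.smul_mul, smul_add, smul_smul, mul_inv_cancel₀ hc, one_smul]
    ext i j
    simp only [Matrix.add_apply, Matrix.smul_apply, Matrix.mul_apply, Fin.sum_univ_two,
      Matrix.vecMulVec_apply, Pi.add_apply, Pi.star_apply, RCLike.star_def, Matrix.of_apply,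
      hU, hV, if_true, Matrix.one_apply, eq_self_iff_true, Fin.one_eq_zero_iff,
      OfNat.ofNat_ne_zero, if_false, ite_true, ite_false, Nat.succ_ne_self]
    by_cases h : i = j <;> simp [h] <;> ring
  have step : (1 + c⁻¹ • (V * U)).det * c ^ 2
      = (c • (1 : Matrix (Fin 2) (Fin 2) ℂ) + V * U).det := by
    have h2 : (c • (1 : Matrix (Fin 2) (Fin 2) ℂ) + V * U) = c • (1 + c⁻¹ • (V * U)) := by
      rw [smul_add, smul_smul, mul_inv_cancel₀ hc, one_smul]
    rw [h2, Matrix.det_smul, Fintype.card_fin]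
    ring
  have hpow : c ^ M = c ^ (M - 2) * c ^ 2 := by rw [← pow_add, Nat.sub_add_cancel hM]
  rw [key, Matrix.det_smul, Fintype.card_fin, Matrix.det_one_add_mul_comm, Matrix.mul_smul,
    hpow, mul_assoc, mul_comm (c ^ 2), step, Matrix.det_fin_two]
  simp only [Matrix.add_apply, Matrix.one_apply, Matrix.mul_apply, Matrix.smul_apply,
    Matrix.of_apply, hU, hV, smul_eq_mul, if_true, eq_self_iff_true,
    Fin.one_eq_zero_iff, OfNat.ofNat_ne_zero, ite_true, ite_false, one_ne_zero,
    Fin.zero_eq_one_iff, Nat.succ_ne_self, if_false, mul_one, mul_zero]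
  have sq : ∀ z : ℂ, ((‖z‖ ^ 2 : ℝ) : ℂ) = (starRingEnd ℂ) z * z := fun z => by
    rw [Complex.sq_norm, mul_comm, ← Complex.mul_conj]
  have n1 : ((∑ i, ‖h₁ i‖ ^ 2 : ℝ) : ℂ) = ∑ i, (starRingEnd ℂ) (h₁ i) * h₁ i := by
    push_cast [← sq]; rfl
  have n2 : ((∑ i, ‖h₂ i‖ ^ 2 : ℝ) : ℂ) = ∑ i, (starRingEnd ℂ) (h₂ i) * h₂ i := by
    push_cast [← sq]; rfl
  have hconj : (starRingEnd ℂ) (∑ i, (starRingEnd ℂ) (h₂ i) * h₁ i)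
      = ∑ i, (starRingEnd ℂ) (h₁ i) * h₂ i := by
    rw [map_sum]
    exact Finset.sum_congr rfl fun i _ => by simp [mul_comm]
  have n3 : (((‖∑ i, (starRingEnd ℂ) (h₂ i) * h₁ i‖ : ℝ) : ℂ)) ^ 2
      = (∑ i, (starRingEnd ℂ) (h₁ i) * h₂ i) * (∑ i, (starRingEnd ℂ) (h₂ i) * h₁ i) := by
    rw [← Complex.ofReal_pow, sq, hconj]
  have e1 : (∑ x, (starRingEnd ℂ) (h₁ x) * (a * h₁ x))
      = a * ∑ x, (starRingEnd ℂ) (h₁ x) * h₁ x := by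
    rw [Finset.mul_sum]; exact Finset.sum_congr rfl fun i _ => by ring
  have e2 : (∑ x, (starRingEnd ℂ) (h₁ x + h₂ x) * (b * (h₁ x + h₂ x)))
      = b * ((∑ x, (starRingEnd ℂ) (h₁ x) * h₁ x) + (∑ x, (starRingEnd ℂ) (h₁ x) * h₂ x)
        + (∑ x, (starRingEnd ℂ) (h₂ x) * h₁ x) + (∑ x, (starRingEnd ℂ) (h₂ x) * h₂ x)) := by
    rw [← Finset.sum_add_distrib, ← Finset.sum_add_distrib, ← Finset.sum_add_distrib,
      Finset.mul_sum]
    exact Finset.sum_congr rfl fun i _ => by simp only [map_add]; ring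
  have e3 : (∑ x, (starRingEnd ℂ) (h₁ x) * (b * (h₁ x + h₂ x)))
      = b * ((∑ x, (starRingEnd ℂ) (h₁ x) * h₁ x) + (∑ x, (starRingEnd ℂ) (h₁ x) * h₂ x)) := by
    rw [← Finset.sum_add_distrib, Finset.mul_sum]
    exact Finset.sum_congr rfl fun i _ => by ring
  have e4 : (∑ x, (starRingEnd ℂ) (h₁ x + h₂ x) * (a * h₁ x))
      = a * ((∑ x, (starRingEnd ℂ) (h₁ x) * h₁ x) + (∑ x, (starRingEnd ℂ) (h₂ x) * h₁ x)) := by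
    rw [← Finset.sum_add_distrib, Finset.mul_sum]
    exact Finset.sum_congr rfl fun i _ => by simp only [map_add]; ring
  rw [e1, e2, e3, e4]
  simp only [hadef, hbdef, Complex.ofReal_mul, Complex.ofReal_add, Complex.ofReal_sub,
    Complex.ofReal_one, Complex.ofReal_pow, n1, n2, n3]
  ring
end

section
/- Let M ≥ 2, h₁, h₂ ∈ ℂ^M, let σ_s², σ_n² > 0 be real, and let k ≥ 1 be real. Define R₁ = (1 − 1/k)·σ_s²·h₁·h₁ᴴ + (1/k)·σ_s²·(h₁+h₂)·(h₁+h₂)ᴴ + σ_n²·I_M, and define P₁ = (σ_s²‖h₁‖² + σ_n²)·((1/k − 1/k²)·σ_s²‖h₂‖² + σ_n²)·(σ_n²)^(M−2). Then |det(R₁) − P₁| ≤ (σ_n²)^(M−2)·[ (1/k²)·σ_s²·σ_n²·‖h₂‖² + (2/k)·σ_s²·σ_n²·‖h₁‖·‖h₂‖ + ((k−1)/k²)·σ_s⁴·‖h₁‖²·‖h₂‖² ]. -/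
open Matrix Complex BigOperators

private lemma conj_mul_self (z : ℂ) : (starRingEnd ℂ) z * z = ((‖z‖:ℝ):ℂ)^2 := by
  rw [mul_comm, Complex.mul_conj]
  norm_cast
  rw [Complex.normSq_eq_norm_sq]

private lemma det_formula (M : ℕ) (hM : 2 ≤ M) (h₁ h₂ : Fin M → ℂ) (a b c : ℝ) (hc : c ≠ 0) :
    (((a:ℝ):ℂ) • Matrix.vecMulVec h₁ (star h₁)
      + ((b:ℝ):ℂ) • Matrix.vecMulVec (h₁ + h₂) (star (h₁ + h₂))
      + ((c:ℝ):ℂ) • (1 : Matrix (Fin M) (Fin M) ℂ)).det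
    = ((c:ℝ):ℂ)^(M-2) *
      ( ((c:ℂ) + a * ((∑ i, ‖h₁ i‖^2 : ℝ):ℂ))
          * ((c:ℂ) + b * (((∑ i, ‖h₁ i‖^2 : ℝ):ℂ) + ((∑ i, ‖h₂ i‖^2 : ℝ):ℂ)
              + (∑ i, (starRingEnd ℂ) (h₁ i) * h₂ i)
              + (starRingEnd ℂ) (∑ i, (starRingEnd ℂ) (h₁ i) * h₂ i)))
        - ((a:ℂ)*b) * (((∑ i, ‖h₁ i‖^2 : ℝ):ℂ) + (∑ i, (starRingEnd ℂ) (h₁ i) * h₂ i))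
            * (((∑ i, ‖h₁ i‖^2 : ℝ):ℂ) + (starRingEnd ℂ) (∑ i, (starRingEnd ℂ) (h₁ i) * h₂ i)) ) := by
  set u : Fin M → ℂ := h₁ + h₂ with hu
  set s : ℂ := ((∑ i, ‖h₁ i‖^2 : ℝ):ℂ) with hs
  set t : ℂ := ((∑ i, ‖h₂ i‖^2 : ℝ):ℂ) with ht
  set p : ℂ := ∑ i, (starRingEnd ℂ) (h₁ i) * h₂ i with hp
  set A : Matrix (Fin M) (Fin 2) ℂ := Matrix.of fun i j => if j = 0 then h₁ i else u i with hA
  set B : Matrix (Fin 2) (Fin M) ℂ := Matrix.of fun j i =>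
    if j = 0 then ((a:ℂ)/(c:ℂ)) * (starRingEnd ℂ) (h₁ i)
    else ((b:ℂ)/(c:ℂ)) * (starRingEnd ℂ) (u i) with hB
  have hcne : ((c:ℝ):ℂ) ≠ 0 := by exact_mod_cast hc
  have hmat : (((a:ℝ):ℂ)) • Matrix.vecMulVec h₁ (star h₁)
      + (((b:ℝ):ℂ)) • Matrix.vecMulVec u (star u)
      + (((c:ℝ):ℂ)) • (1 : Matrix (Fin M) (Fin M) ℂ)
      = ((c:ℝ):ℂ) • (1 + A * B) := by
    ext i j
    simp only [Matrix.add_apply, Matrix.smul_apply, Matrix.vecMulVec_apply, Pi.star_apply,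
      Matrix.one_apply, Matrix.mul_apply, Fin.sum_univ_two, hA, hB, Matrix.of_apply,
      smul_eq_mul]
    norm_num
    field_simp
    split_ifs <;> ring
  rw [hmat, Matrix.det_smul, Matrix.det_one_add_mul_comm, Fintype.card_fin]
  have S11 : ∑ l, (starRingEnd ℂ) (h₁ l) * h₁ l = s := by
    rw [hs]; push_cast; exact Finset.sum_congr rfl fun i _ => conj_mul_self _
  have S22 : ∑ l, (starRingEnd ℂ) (h₂ l) * h₂ l = t := by
    rw [ht]; push_cast; exact Finset.sum_congr rfl fun i _ => conj_mul_self _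
  have S21 : ∑ l, (starRingEnd ℂ) (h₂ l) * h₁ l = (starRingEnd ℂ) p := by
    rw [hp, map_sum]
    refine Finset.sum_congr rfl fun i _ => ?_
    rw [_root_.map_mul, Complex.conj_conj]
    ring
  have e00 : (B * A) 0 0 = ((a:ℂ)/c) * s := by
    simp only [Matrix.mul_apply, hA, hB, Matrix.of_apply]
    norm_num
    rw [← S11, Finset.mul_sum]
    exact Finset.sum_congr rfl fun i _ => by ring
  have e01 : (B * A) 0 1 = ((a:ℂ)/c) * (s + p) := by
    simp only [Matrix.mul_apply, hA, hB, Matrix.of_apply]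
    norm_num
    rw [← S11, hp, hu]
    simp only [Pi.add_apply, Finset.mul_sum, mul_add, ← Finset.sum_add_distrib]
    exact Finset.sum_congr rfl fun i _ => by ring
  have e10 : (B * A) 1 0 = ((b:ℂ)/c) * (s + (starRingEnd ℂ) p) := by
    simp only [Matrix.mul_apply, hA, hB, Matrix.of_apply]
    norm_num
    rw [← S11, ← S21, hu]
    simp only [Pi.add_apply, map_add, Finset.mul_sum, add_mul, mul_add, ← Finset.sum_add_distrib]
    exact Finset.sum_congr rfl fun i _ => by ring
  have e11 : (B * A) 1 1 = ((b:ℂ)/c) * (s + t + p + (starRingEnd ℂ) p) := by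
    simp only [Matrix.mul_apply, hA, hB, Matrix.of_apply]
    norm_num
    rw [← S11, ← S22, ← S21, hp, hu]
    simp only [Pi.add_apply, map_add, Finset.mul_sum, add_mul, mul_add, ← Finset.sum_add_distrib]
    exact Finset.sum_congr rfl fun i _ => by ring
  rw [Matrix.det_fin_two]
  simp only [Matrix.add_apply, Matrix.one_apply, e00, e01, e10, e11]
  norm_num
  have hM' : M = (M - 2) + 2 := by omega
  rw [hM', pow_add]
  field_simp
  simp only [Nat.add_sub_cancel_left, Nat.add_sub_cancel]
  ring

set_option maxHeartbeats 1000000 in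
/-- Quantitative form of Theorem 1: the determinant of
`R₁ = (1 − 1/k)σ_s² h₁h₁ᴴ + (1/k)σ_s² (h₁+h₂)(h₁+h₂)ᴴ + σ_n² I_M` differs from the
dominant term `P₁ = (σ_s²‖h₁‖² + σ_n²)((1/k − 1/k²)σ_s²‖h₂‖² + σ_n²)(σ_n²)^(M−2)` by at most
`(σ_n²)^(M−2)·[(1/k²)σ_s²σ_n²‖h₂‖² + (2/k)σ_s²σ_n²‖h₁‖‖h₂‖ + ((k−1)/k²)σ_s⁴‖h₁‖²‖h₂‖²]`. -/
theorem det_R1_dominant_term_bound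
    (M : ℕ) (hM : 2 ≤ M) (h₁ h₂ : Fin M → ℂ) (σs2 σn2 : ℝ)
    (hσs2 : 0 < σs2) (hσn2 : 0 < σn2) (k : ℝ) (hk : 1 ≤ k) :
    ‖(((((1 - 1/k) * σs2 : ℝ) : ℂ) • Matrix.vecMulVec h₁ (star h₁)
            + (((1/k) * σs2 : ℝ) : ℂ) • Matrix.vecMulVec (h₁ + h₂) (star (h₁ + h₂))
            + ((σn2 : ℝ) : ℂ) • (1 : Matrix (Fin M) (Fin M) ℂ)).det
          - (((σs2 * (∑ i, ‖h₁ i‖ ^ 2) + σn2)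
              * ((1/k - 1/k^2) * σs2 * (∑ i, ‖h₂ i‖ ^ 2) + σn2)
              * σn2 ^ (M - 2) : ℝ) : ℂ))‖
      ≤ σn2 ^ (M - 2) *
          ( (1/k^2) * σs2 * σn2 * (∑ i, ‖h₂ i‖ ^ 2)
            + (2/k) * σs2 * σn2 * Real.sqrt (∑ i, ‖h₁ i‖ ^ 2) * Real.sqrt (∑ i, ‖h₂ i‖ ^ 2)
            + ((k - 1)/k^2) * σs2 ^ 2 * (∑ i, ‖h₁ i‖ ^ 2) * (∑ i, ‖h₂ i‖ ^ 2) ) := by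
  have hk0 : (0:ℝ) < k := lt_of_lt_of_le one_pos hk
  have hkne : k ≠ 0 := ne_of_gt hk0
  have hσn2ne : σn2 ≠ 0 := ne_of_gt hσn2
  rw [det_formula M hM h₁ h₂ ((1 - 1/k) * σs2) ((1/k) * σs2) σn2 hσn2ne]
  set s : ℝ := ∑ i, ‖h₁ i‖ ^ 2 with hsdef
  set t : ℝ := ∑ i, ‖h₂ i‖ ^ 2 with htdef
  set p : ℂ := ∑ i, (starRingEnd ℂ) (h₁ i) * h₂ i with hpdef
  have hs0 : 0 ≤ s := Finset.sum_nonneg fun i _ => by positivity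
  have ht0 : 0 ≤ t := Finset.sum_nonneg fun i _ => by positivity
  have hCS : ‖p‖ ≤ Real.sqrt s * Real.sqrt t := by
    calc ‖p‖ ≤ ∑ i, ‖(starRingEnd ℂ) (h₁ i) * h₂ i‖ := by
          rw [hpdef]; exact norm_sum_le _ _
      _ = ∑ i, ‖h₁ i‖ * ‖h₂ i‖ := by
          refine Finset.sum_congr rfl fun i _ => ?_
          simp [norm_mul, Complex.norm_conj]
      _ ≤ Real.sqrt (∑ i, ‖h₁ i‖^2) * Real.sqrt (∑ i, ‖h₂ i‖^2) :=
          Real.sum_mul_le_sqrt_mul_sqrt _ _ _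
  clear_value s t p
  set E : ℂ := ((σs2 * σn2 * t / k^2 : ℝ):ℂ)
      + ((σs2 * σn2 / k : ℝ):ℂ) * (p + (starRingEnd ℂ) p)
      - (((1 - 1/k) * σs2 * ((1/k) * σs2) : ℝ):ℂ) * (p * (starRingEnd ℂ) p) with hEdef
  have key : ((σn2:ℝ):ℂ)^(M-2) *
      ( ((σn2:ℂ) + ((1 - 1/k) * σs2 : ℝ) * (s:ℂ))
          * ((σn2:ℂ) + ((1/k) * σs2 : ℝ) * ((s:ℂ) + (t:ℂ) + p + (starRingEnd ℂ) p))
        - ((((1 - 1/k) * σs2 : ℝ):ℂ) * (((1/k) * σs2 : ℝ):ℂ)) * ((s:ℂ) + p)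
            * ((s:ℂ) + (starRingEnd ℂ) p) )
      - (((σs2 * s + σn2) * ((1/k - 1/k^2) * σs2 * t + σn2) * σn2 ^ (M - 2) : ℝ) : ℂ)
      = ((σn2:ℝ):ℂ)^(M-2) * E := by
    rw [hEdef]
    push_cast
    have hkC : ((k:ℝ):ℂ) ≠ 0 := by exact_mod_cast hkne
    field_simp
    ring
  rw [key]
  rw [norm_mul]
  have habs1 : ‖((σn2:ℝ):ℂ)^(M-2)‖ = σn2 ^ (M-2) := by
    rw [← Complex.ofReal_pow, Complex.norm_real, Real.norm_eq_abs]
    exact abs_of_nonneg (by positivity)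
  rw [habs1]
  clear key
  have hEbound : ‖E‖ ≤
      (1/k^2) * σs2 * σn2 * t
        + (2/k) * σs2 * σn2 * Real.sqrt s * Real.sqrt t
        + ((k - 1)/k^2) * σs2 ^ 2 * s * t := by
    have h3 : p * (starRingEnd ℂ) p = ((‖p‖ ^ 2 : ℝ):ℂ) := by
      rw [Complex.mul_conj, Complex.sq_norm]
    have h2 : p + (starRingEnd ℂ) p = ((2 * p.re : ℝ):ℂ) := by
      rw [Complex.add_conj]
    rw [hEdef, h3, h2]
    have tri : ‖((σs2 * σn2 * t / k^2 : ℝ):ℂ)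
        + ((σs2 * σn2 / k : ℝ):ℂ) * ((2 * p.re : ℝ):ℂ)
        - (((1 - 1/k) * σs2 * ((1/k) * σs2) : ℝ):ℂ) * ((‖p‖ ^ 2 : ℝ):ℂ)‖
        ≤ ‖((σs2 * σn2 * t / k^2 : ℝ):ℂ)‖
          + ‖((σs2 * σn2 / k : ℝ):ℂ) * ((2 * p.re : ℝ):ℂ)‖
          + ‖(((1 - 1/k) * σs2 * ((1/k) * σs2) : ℝ):ℂ) * ((‖p‖ ^ 2 : ℝ):ℂ)‖ := by
      refine le_trans (norm_sub_le _ _) ?_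
      gcongr
      exact norm_add_le _ _
    refine le_trans tri ?_
    rw [norm_mul, norm_mul]
    simp only [Complex.norm_real, Real.norm_eq_abs]
    have h1k : (0:ℝ) ≤ 1 - 1/k := by
      have : (1:ℝ)/k ≤ 1 := by rw [div_le_one hk0]; exact hk
      linarith
    have hab : (0:ℝ) ≤ (1 - 1/k) * σs2 * ((1/k) * σs2) :=
      mul_nonneg (mul_nonneg h1k hσs2.le) (by positivity)
    have ha1 : (0:ℝ) ≤ σs2 * σn2 * t / k^2 :=
      div_nonneg (mul_nonneg (by positivity) ht0) (by positivity)
    rw [_root_.abs_of_nonneg ha1,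
        _root_.abs_of_nonneg (by positivity : (0:ℝ) ≤ σs2 * σn2 / k),
        _root_.abs_of_nonneg hab, _root_.abs_of_nonneg (by positivity : (0:ℝ) ≤ ‖p‖ ^ 2)]
    have hre : |2 * p.re| ≤ 2 * ‖p‖ := by
      calc |2 * p.re| = 2 * |p.re| := by
            rw [abs_mul]; norm_num
        _ ≤ 2 * ‖p‖ := by linarith [Complex.abs_re_le_norm p]
    have hp2 : ‖p‖ ^ 2 ≤ s * t := by
      have h2 : (Real.sqrt s * Real.sqrt t)^2 = s * t := by
        rw [mul_pow, Real.sq_sqrt hs0, Real.sq_sqrt ht0]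
      calc ‖p‖ ^ 2 ≤ (Real.sqrt s * Real.sqrt t)^2 :=
            pow_le_pow_left₀ (norm_nonneg p) hCS 2
        _ = s * t := h2
    have hsqrtst : 0 ≤ Real.sqrt s * Real.sqrt t := by positivity
    have e1 : σs2 * σn2 * t / k^2 = (1/k^2) * σs2 * σn2 * t := by ring
    have e3 : (1 - 1/k) * σs2 * ((1/k) * σs2) = ((k-1)/k^2) * σs2^2 := by
      field_simp
    rw [e1, e3]
    have step2 : σs2 * σn2 / k * |2 * p.re| ≤ (2/k) * σs2 * σn2 * Real.sqrt s * Real.sqrt t := by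
      calc σs2 * σn2 / k * |2 * p.re| ≤ σs2 * σn2 / k * (2 * ‖p‖) := by
            gcongr
        _ ≤ σs2 * σn2 / k * (2 * (Real.sqrt s * Real.sqrt t)) := by gcongr
        _ = (2/k) * σs2 * σn2 * Real.sqrt s * Real.sqrt t := by ring
    have step3 : ((k-1)/k^2) * σs2^2 * ‖p‖ ^ 2 ≤ ((k-1)/k^2) * σs2^2 * (s * t) := by
      have hk1 : (0:ℝ) ≤ (k-1)/k^2 := div_nonneg (by linarith) (by positivity)
      exact mul_le_mul_of_nonneg_left hp2 (mul_nonneg hk1 (by positivity))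
    linarith [step2, step3]
  calc σn2 ^ (M-2) * ‖E‖
      ≤ σn2 ^ (M-2) * ((1/k^2) * σs2 * σn2 * t
        + (2/k) * σs2 * σn2 * Real.sqrt s * Real.sqrt t
        + ((k - 1)/k^2) * σs2 ^ 2 * s * t) := by
        exact mul_le_mul_of_nonneg_left hEbound (by positivity)
    _ = _ := by ring
end
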